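/- Let φ₁, φ₂ : ℝⁿ → ℝ be convex functions of linear growth with equal recession functions (φ̄₁ = φ̄₂ on S^{n-1}). Then φ₂(x) - φ₁(x) = o(|x|) as |x| → ∞; in particular, for every R > 0 the function x ↦ max(0, R(φ₂(x) - φ₁(x)) - |x|) is continuous with compact support. -/

import Mathlib

open Filter Topology

/-- `φ` is a convex function of linear growth on `ℝⁿ`. -/
def IsLinGrowthConvex {n : ℕ} (φ : EuclideanSpace ℝ (Fin n) → ℝ) : Prop :=
  ConvexOn ℝ Set.univ φ ∧ ∃ A B : ℝ, 0 < A ∧ 0 < B ∧ ∀ x, φ x ≤ A * ‖x‖ + B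

/-- The recession function of `φ`, `φ̄(θ) = sup_{λ>0} (φ(λθ) - φ(0))/λ`. -/
noncomputable def recessionFn {n : ℕ} (φ : EuclideanSpace ℝ (Fin n) → ℝ)
    (θ : EuclideanSpace ℝ (Fin n)) : ℝ :=
  ⨆ l : {l : ℝ // 0 < l}, (φ (l.1 • θ) - φ 0) / l.1


instance posRealsNonempty : Nonempty {l : ℝ // 0 < l} := ⟨⟨1, one_pos⟩⟩

variable {n : ℕ}

/-- monotonicity of difference quotients -/
lemma quot_mono {φ : EuclideanSpace ℝ (Fin n) → ℝ} (hφ : ConvexOn ℝ Set.univ φ)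
    (θ : EuclideanSpace ℝ (Fin n)) {s t : ℝ} (hs : 0 < s) (hst : s ≤ t) :
    (φ (s • θ) - φ 0) / s ≤ (φ (t • θ) - φ 0) / t := by
  have hψ : ConvexOn ℝ Set.univ (fun r : ℝ => φ (r • θ)) := by
    refine ⟨convex_univ, fun x _ y _ a b ha hb hab => ?_⟩
    have := hφ.2 (Set.mem_univ (x • θ)) (Set.mem_univ (y • θ)) ha hb hab
    simpa [smul_smul, add_smul] using this
  have := hψ.secant_mono (a := 0) (x := s) (y := t) (Set.mem_univ _) (Set.mem_univ _)
    (Set.mem_univ _) hs.ne' (hs.trans_le hst).ne' hst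
  simpa [zero_smul] using this


lemma bddAbove_quot {φ : EuclideanSpace ℝ (Fin n) → ℝ} (h : IsLinGrowthConvex φ)
    (θ : EuclideanSpace ℝ (Fin n)) :
    BddAbove (Set.range fun l : {l : ℝ // 0 < l} => (φ (l.1 • θ) - φ 0) / l.1) := by
  obtain ⟨hconv, A, B, hA, hB, hbound⟩ := h
  refine ⟨A * ‖θ‖ + |B - φ 0|, ?_⟩
  rintro _ ⟨⟨l, hl⟩, rfl⟩
  have hm1 : (1 : ℝ) ≤ max l 1 := le_max_right _ _
  have hm0 : (0 : ℝ) < max l 1 := lt_of_lt_of_le one_pos hm1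
  have step1 : (φ (l • θ) - φ 0) / l ≤ (φ (max l 1 • θ) - φ 0) / max l 1 :=
    quot_mono hconv θ hl (le_max_left _ _)
  refine step1.trans ?_
  have hb := hbound (max l 1 • θ)
  rw [norm_smul] at hb
  have habs : ‖max l 1‖ = max l 1 := by rw [Real.norm_eq_abs, abs_of_pos hm0]
  rw [habs] at hb
  have h1 : (φ (max l 1 • θ) - φ 0) / max l 1 ≤ A * ‖θ‖ + (B - φ 0) / max l 1 := by
    rw [div_le_iff₀ hm0]
    have : A * (max l 1 * ‖θ‖) + B - φ 0 = (A * ‖θ‖ + (B - φ 0) / max l 1) * max l 1 := by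
      field_simp; ring
    linarith [hb, this ▸ (by linarith [hb] : φ (max l 1 • θ) - φ 0 ≤ A * (max l 1 * ‖θ‖) + B - φ 0)]
  refine h1.trans ?_
  have : (B - φ 0) / max l 1 ≤ |B - φ 0| := by
    calc (B - φ 0) / max l 1 ≤ |B - φ 0| / max l 1 :=
          div_le_div_of_nonneg_right (le_abs_self _) hm0.le
      _ ≤ |B - φ 0| := div_le_self (abs_nonneg _) hm1
  linarith


lemma quot_le_rec {φ : EuclideanSpace ℝ (Fin n) → ℝ} (h : IsLinGrowthConvex φ)
    (θ : EuclideanSpace ℝ (Fin n)) {l : ℝ} (hl : 0 < l) :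
    (φ (l • θ) - φ 0) / l ≤ recessionFn φ θ :=
  le_ciSup (bddAbove_quot h θ) ⟨l, hl⟩

lemma rec_convex {φ : EuclideanSpace ℝ (Fin n) → ℝ} (h : IsLinGrowthConvex φ) :
    ConvexOn ℝ Set.univ (recessionFn φ) := by
  refine ⟨convex_univ, fun x _ y _ a b ha hb hab => ?_⟩
  simp only [smul_eq_mul]
  refine ciSup_le fun ⟨l, hl⟩ => ?_
  have key : φ (l • (a • x + b • y)) ≤ a * φ (l • x) + b * φ (l • y) := by
    have := h.1.2 (Set.mem_univ (l • x)) (Set.mem_univ (l • y)) ha hb hab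
    simpa [smul_add, smul_smul, mul_comm] using this
  have hq : (φ (l • (a • x + b • y)) - φ 0) / l ≤
      a * ((φ (l • x) - φ 0) / l) + b * ((φ (l • y) - φ 0) / l) := by
    have expand : a * ((φ (l • x) - φ 0) / l) + b * ((φ (l • y) - φ 0) / l)
        = (a * (φ (l • x) - φ 0) + b * (φ (l • y) - φ 0)) / l := by
      field_simp
    rw [expand]
    apply div_le_div_of_nonneg_right _ hl.le
    have h0 : a * φ 0 + b * φ 0 = φ 0 := by rw [← add_mul, hab, one_mul]
    linarith [key, h0]
  refine hq.trans ?_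
  have h1 : (φ (l • x) - φ 0) / l ≤ recessionFn φ x := quot_le_rec h x hl
  have h2 : (φ (l • y) - φ 0) / l ≤ recessionFn φ y := quot_le_rec h y hl
  have := mul_le_mul_of_nonneg_left h1 ha
  have := mul_le_mul_of_nonneg_left h2 hb
  linarith

lemma lgc_continuous {φ : EuclideanSpace ℝ (Fin n) → ℝ} (h : ConvexOn ℝ Set.univ φ) :
    Continuous φ := by
  rw [← continuousOn_univ]
  exact h.continuousOn isOpen_univ


lemma rec_continuous {φ : EuclideanSpace ℝ (Fin n) → ℝ} (h : IsLinGrowthConvex φ) :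
    Continuous (recessionFn φ) := lgc_continuous (rec_convex h)

lemma key_uniform {φ : EuclideanSpace ℝ (Fin n) → ℝ} (h : IsLinGrowthConvex φ) {ε : ℝ} (hε : 0 < ε) :
    ∃ L : ℝ, 1 ≤ L ∧ ∀ θ : EuclideanSpace ℝ (Fin n), ‖θ‖ = 1 → ∀ l : ℝ, L ≤ l →
      recessionFn φ θ - ε ≤ (φ (l • θ) - φ 0) / l := by
  have hφc : Continuous φ := lgc_continuous h.1
  have hrc : Continuous (recessionFn φ) := rec_continuous h
  set S := Metric.sphere (0 : EuclideanSpace ℝ (Fin n)) 1 with hS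
  set U : {l : ℝ // 1 ≤ l} → Set (EuclideanSpace ℝ (Fin n)) :=
    fun l => {θ | recessionFn φ θ - (φ (l.1 • θ) - φ 0) / l.1 < ε} with hU
  have hUopen : ∀ l, IsOpen (U l) := by
    intro l
    exact isOpen_lt (hrc.sub (((hφc.comp (continuous_const_smul l.1)).sub
      continuous_const).div_const l.1)) continuous_const
  have hcover : S ⊆ ⋃ l, U l := by
    intro θ _
    have hlt : recessionFn φ θ - ε < recessionFn φ θ := by linarith
    obtain ⟨⟨l₀, hl₀⟩, hql⟩ := exists_lt_of_lt_ciSup hlt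
    have hmono : (φ (l₀ • θ) - φ 0) / l₀ ≤ (φ (max l₀ 1 • θ) - φ 0) / max l₀ 1 :=
      quot_mono h.1 θ hl₀ (le_max_left _ _)
    refine Set.mem_iUnion.2 ⟨⟨max l₀ 1, le_max_right _ _⟩, ?_⟩
    simp only [hU, Set.mem_setOf_eq]
    linarith
  obtain ⟨t, ht⟩ := (isCompact_sphere (0 : EuclideanSpace ℝ (Fin n)) 1).elim_finite_subcover
    U hUopen hcover
  refine ⟨1 + ∑ l ∈ t, |l.1|, by
    have := Finset.sum_nonneg (fun i (_ : i ∈ t) => abs_nonneg i.1); linarith, fun θ hθ l hl => ?_⟩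
  have hθS : θ ∈ S := by simp [hS, hθ]
  obtain ⟨l₁, hl₁t, hl₁⟩ := Set.mem_iUnion₂.1 (ht hθS)
  simp only [hU, Set.mem_setOf_eq] at hl₁
  have hl₁pos : (0 : ℝ) < l₁.1 := lt_of_lt_of_le one_pos l₁.2
  have hl₁L : l₁.1 ≤ 1 + ∑ l ∈ t, |l.1| := by
    have := Finset.single_le_sum (f := fun l : {l : ℝ // 1 ≤ l} => |l.1|)
      (fun i _ => abs_nonneg _) hl₁t
    have := le_abs_self l₁.1
    linarith
  have hmono : (φ (l₁.1 • θ) - φ 0) / l₁.1 ≤ (φ (l • θ) - φ 0) / l :=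
    quot_mono h.1 θ hl₁pos (hl₁L.trans hl)
  linarith

/-- If two convex functions of linear growth have the same recession function,
their difference is `o(|x|)`, and `max(0, R(φ₂-φ₁) - |x|)` is continuous with
compact support for every `R > 0`. -/
theorem sublinear_difference_of_equal_recession {n : ℕ}
    (φ₁ φ₂ : EuclideanSpace ℝ (Fin n) → ℝ)
    (h₁ : IsLinGrowthConvex φ₁) (h₂ : IsLinGrowthConvex φ₂)
    (hrec : ∀ θ : EuclideanSpace ℝ (Fin n), ‖θ‖ = 1 →
      recessionFn φ₁ θ = recessionFn φ₂ θ) :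
    (∀ ε : ℝ, 0 < ε → ∃ R : ℝ, ∀ x : EuclideanSpace ℝ (Fin n),
        R ≤ ‖x‖ → |φ₂ x - φ₁ x| ≤ ε * ‖x‖) ∧
      ∀ R : ℝ, 0 < R →
        Continuous (fun x : EuclideanSpace ℝ (Fin n) =>
          max 0 (R * (φ₂ x - φ₁ x) - ‖x‖)) ∧
        HasCompactSupport (fun x : EuclideanSpace ℝ (Fin n) =>
          max 0 (R * (φ₂ x - φ₁ x) - ‖x‖)) := by
  have hsub : ∀ ε : ℝ, 0 < ε → ∃ R : ℝ, ∀ x : EuclideanSpace ℝ (Fin n),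
      R ≤ ‖x‖ → |φ₂ x - φ₁ x| ≤ ε * ‖x‖ := by
    intro ε hε
    obtain ⟨L₁, hL₁1, hL₁⟩ := key_uniform h₁ (by linarith : (0:ℝ) < ε/4)
    obtain ⟨L₂, hL₂1, hL₂⟩ := key_uniform h₂ (by linarith : (0:ℝ) < ε/4)
    set δ := |φ₂ 0 - φ₁ 0| with hδ
    refine ⟨max (max L₁ L₂) (2*δ/ε + 1), fun x hx => ?_⟩
    set l := ‖x‖ with hl
    have hl1 : 1 ≤ l := le_trans (le_trans hL₁1 ((le_max_left _ _).trans (le_max_left _ _))) hx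
    have hlpos : 0 < l := lt_of_lt_of_le one_pos hl1
    set θ := l⁻¹ • x with hθ
    have hθ1 : ‖θ‖ = 1 := by
      rw [hθ, norm_smul, norm_inv, Real.norm_eq_abs, abs_of_pos hlpos, ← hl,
        inv_mul_cancel₀ hlpos.ne']
    have hxθ : x = l • θ := by rw [hθ, smul_smul, mul_inv_cancel₀ hlpos.ne', one_smul]
    set c := recessionFn φ₁ θ with hc
    have hc2 : recessionFn φ₂ θ = c := (hrec θ hθ1).symm
    have hL₁l : L₁ ≤ l := le_trans ((le_max_left _ _).trans (le_max_left _ _)) hx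
    have hL₂l : L₂ ≤ l := le_trans ((le_max_right _ _).trans (le_max_left _ _)) hx
    -- bounds for φ₁
    have hu₁ : (φ₁ (l • θ) - φ₁ 0) / l ≤ c := quot_le_rec h₁ θ hlpos
    have hd₁ : c - ε/4 ≤ (φ₁ (l • θ) - φ₁ 0) / l := hL₁ θ hθ1 l hL₁l
    have hu₂ : (φ₂ (l • θ) - φ₂ 0) / l ≤ c := hc2 ▸ quot_le_rec h₂ θ hlpos
    have hd₂ : c - ε/4 ≤ (φ₂ (l • θ) - φ₂ 0) / l := by
      have := hL₂ θ hθ1 l hL₂l; rw [hc2] at this; exact this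
    rw [hxθ]
    have e₁ : |φ₁ (l • θ) - φ₁ 0 - c * l| ≤ (ε/4) * l := by
      rw [abs_le]
      constructor
      · have := (mul_le_mul_of_nonneg_right hd₁ hlpos.le)
        rw [div_mul_cancel₀ _ hlpos.ne'] at this
        nlinarith
      · have := (mul_le_mul_of_nonneg_right hu₁ hlpos.le)
        rw [div_mul_cancel₀ _ hlpos.ne'] at this
        nlinarith [mul_pos (by linarith : (0:ℝ) < ε/4) hlpos]
    have e₂ : |φ₂ (l • θ) - φ₂ 0 - c * l| ≤ (ε/4) * l := by
      rw [abs_le]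
      constructor
      · have := (mul_le_mul_of_nonneg_right hd₂ hlpos.le)
        rw [div_mul_cancel₀ _ hlpos.ne'] at this
        nlinarith
      · have := (mul_le_mul_of_nonneg_right hu₂ hlpos.le)
        rw [div_mul_cancel₀ _ hlpos.ne'] at this
        nlinarith [mul_pos (by linarith : (0:ℝ) < ε/4) hlpos]
    have hδl : δ ≤ (ε/2) * l := by
      have h2 : 2*δ/ε + 1 ≤ l := le_trans (le_max_right _ _) hx
      have : (ε/2) * (2*δ/ε + 1) = δ + ε/2 := by field_simp
      nlinarith [abs_nonneg (φ₂ 0 - φ₁ 0)]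
    have decomp : φ₂ (l • θ) - φ₁ (l • θ) =
        (φ₂ (l • θ) - φ₂ 0 - c * l) - (φ₁ (l • θ) - φ₁ 0 - c * l) + (φ₂ 0 - φ₁ 0) := by ring
    rw [decomp]
    calc |(φ₂ (l • θ) - φ₂ 0 - c * l) - (φ₁ (l • θ) - φ₁ 0 - c * l) + (φ₂ 0 - φ₁ 0)|
        ≤ |φ₂ (l • θ) - φ₂ 0 - c * l| + |φ₁ (l • θ) - φ₁ 0 - c * l| + |φ₂ 0 - φ₁ 0| := by
          exact (abs_add_le _ _).trans (by gcongr; exact abs_sub _ _)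
      _ ≤ (ε/4)*l + (ε/4)*l + (ε/2)*l := by
          refine add_le_add (add_le_add e₂ e₁) hδl
      _ = ε * l := by ring
  refine ⟨hsub, fun R hR => ?_⟩
  have hc₁ : Continuous φ₁ := lgc_continuous h₁.1
  have hc₂ : Continuous φ₂ := lgc_continuous h₂.1
  refine ⟨continuous_const.max (((continuous_const.mul (hc₂.sub hc₁)).sub continuous_norm)), ?_⟩
  obtain ⟨R₀, hR₀⟩ := hsub ((2*R)⁻¹) (by positivity)
  refine HasCompactSupport.intro (isCompact_closedBall (0 : EuclideanSpace ℝ (Fin n))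
    (max R₀ 0)) (fun x hx => ?_)
  have hnx : max R₀ 0 < ‖x‖ := by
    simpa [Metric.mem_closedBall, dist_zero_right] using hx
  have h1 : |φ₂ x - φ₁ x| ≤ (2*R)⁻¹ * ‖x‖ := hR₀ x (le_of_lt (lt_of_le_of_lt (le_max_left _ _) hnx))
  have hxpos : 0 < ‖x‖ := lt_of_le_of_lt (le_max_right _ _) hnx
  have h2 : R * (φ₂ x - φ₁ x) ≤ ‖x‖ / 2 := by
    have hle : φ₂ x - φ₁ x ≤ (2*R)⁻¹ * ‖x‖ := le_trans (le_abs_self _) h1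
    have := mul_le_mul_of_nonneg_left hle hR.le
    have hcalc : R * ((2*R)⁻¹ * ‖x‖) = ‖x‖ / 2 := by
      rw [mul_inv, ← mul_assoc, ← mul_assoc, mul_comm R 2⁻¹, mul_assoc 2⁻¹ R R⁻¹,
        mul_inv_cancel₀ hR.ne', mul_one, div_eq_inv_mul]
    rw [hcalc] at this
    linarith
  have : R * (φ₂ x - φ₁ x) - ‖x‖ ≤ 0 := by linarith
  exact max_eq_left this
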